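/- Let X and Y be real m×n matrices such that Y Yᵀ is positive definite. Then tr((X Xᵀ)^{1/2}) ≤ (1/2)·tr( (Y Yᵀ)^{-1/2} · X Xᵀ ) + (1/2)·tr((Y Yᵀ)^{1/2}), where (Y Yᵀ)^{-1/2} denotes the inverse of the positive definite square root of Y Yᵀ. -/

import Mathlib

open Matrix

open Classical in
/-- The positive semidefinite square root of a matrix (junk value `0` if the matrix is not
positive semidefinite). -/
noncomputable def matSqrt {k : ℕ} (P : Matrix (Fin k) (Fin k) ℝ) : Matrix (Fin k) (Fin k) ℝ :=
  if h : P.PosSemidef then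
    h.1.eigenvectorUnitary.1 * diagonal ((↑) ∘ (√·) ∘ h.1.eigenvalues) *
      (star h.1.eigenvectorUnitary : Matrix (Fin k) (Fin k) ℝ)
  else 0

lemma matSqrt_spec {k : ℕ} {P : Matrix (Fin k) (Fin k) ℝ} (h : P.PosSemidef) :
    (matSqrt P).PosSemidef ∧ matSqrt P * matSqrt P = P := by
  rw [matSqrt, dif_pos h]
  have hU : star (h.1.eigenvectorUnitary : Matrix (Fin k) (Fin k) ℝ) *
      (h.1.eigenvectorUnitary : Matrix (Fin k) (Fin k) ℝ) = 1 := h.1.eigenvectorUnitary.2.1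
  constructor
  · have hD : (diagonal ((↑) ∘ (√·) ∘ h.1.eigenvalues) : Matrix (Fin k) (Fin k) ℝ).PosSemidef := by
      rw [posSemidef_diagonal_iff]
      intro i
      simp [Real.sqrt_nonneg]
    exact hD.mul_mul_conjTranspose_same _
  · have e : ∀ U D : Matrix (Fin k) (Fin k) ℝ,
        U * D * star U * (U * D * star U) = U * D * (star U * U) * D * star U := by
      intro U D; simp only [Matrix.mul_assoc]
    rw [e, hU, Matrix.mul_one, Matrix.mul_assoc _ (diagonal _) (diagonal _), diagonal_mul_diagonal]
    conv_rhs => rw [h.1.spectral_theorem, Unitary.conjStarAlgAut_apply]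
    congr 3
    ext i
    simp [Real.mul_self_sqrt (h.eigenvalues_nonneg i)]

lemma psd_trace_nonneg {k : ℕ} {M : Matrix (Fin k) (Fin k) ℝ} (h : M.PosSemidef) :
    0 ≤ M.trace := by
  rw [Matrix.trace]
  refine Finset.sum_nonneg fun i _ => ?_
  have := h.2 (Finsupp.single i 1)
  simpa using this

lemma psd_trace_mul_nonneg {k : ℕ} {W M : Matrix (Fin k) (Fin k) ℝ}
    (hW : W.PosSemidef) (hM : M.PosSemidef) : 0 ≤ (W * M).trace := by
  classical
  have hsq : matSqrt W * matSqrt W = W := (matSqrt_spec hW).2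
  have h1 : (W * M).trace = (matSqrt W * M * matSqrt W).trace := by
    rw [Matrix.trace_mul_cycle, hsq]
  rw [h1]
  refine psd_trace_nonneg ?_
  have := hM.mul_mul_conjTranspose_same (matSqrt W)
  rwa [(matSqrt_spec hW).1.1.eq] at this

/-- quadratic (MM) upper bound on the nuclear norm. If `Y Yᵀ` is positive
definite, then `tr((X Xᵀ)^{1/2}) ≤ (1/2)·tr((Y Yᵀ)^{-1/2} · X Xᵀ) + (1/2)·tr((Y Yᵀ)^{1/2})`,
where `(Y Yᵀ)^{-1/2}` is the inverse of the positive definite square root of `Y Yᵀ`. -/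
theorem nuclearNorm_le_quadratic_majorant {m n : ℕ}
    (X Y : Matrix (Fin m) (Fin n) ℝ) (hY : (Y * Yᵀ).PosDef) :
    (matSqrt (X * Xᵀ)).trace ≤
      (1 / 2) * ((matSqrt (Y * Yᵀ))⁻¹ * (X * Xᵀ)).trace +
        (1 / 2) * (matSqrt (Y * Yᵀ)).trace := by
  classical
  have hP : (X * Xᵀ).PosSemidef := by
    have := Matrix.posSemidef_self_mul_conjTranspose X
    rwa [Matrix.conjTranspose_eq_transpose_of_trivial] at this
  have hQ : (Y * Yᵀ).PosSemidef := hY.posSemidef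
  set A := matSqrt (X * Xᵀ) with hAdef
  set B := matSqrt (Y * Yᵀ) with hBdef
  have hApsd : A.PosSemidef := (matSqrt_spec hP).1
  have hBpsd : B.PosSemidef := (matSqrt_spec hQ).1
  have hAA : A * A = X * Xᵀ := (matSqrt_spec hP).2
  have hBB : B * B = Y * Yᵀ := (matSqrt_spec hQ).2
  have hdet : B.det ≠ 0 := fun h => (ne_of_gt hY.det_pos) (by rw [← hBB, Matrix.det_mul, h, mul_zero])
  have hBW : B * B⁻¹ = 1 := Matrix.mul_nonsing_inv B (isUnit_iff_ne_zero.mpr hdet)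
  have hWB : B⁻¹ * B = 1 := Matrix.nonsing_inv_mul B (isUnit_iff_ne_zero.mpr hdet)
  set W := B⁻¹ with hWdef
  have hAt : Aᵀ = A := by
    rw [← Matrix.conjTranspose_eq_transpose_of_trivial, hApsd.1.eq]
  have hBt : Bᵀ = B := by
    rw [← Matrix.conjTranspose_eq_transpose_of_trivial, hBpsd.1.eq]
  have hWt : Wᵀ = W := by rw [hWdef, Matrix.transpose_nonsing_inv, hBt]
  have hWpsd : W.PosSemidef := by
    have := hBpsd.conjTranspose_mul_mul_same W
    rw [Matrix.conjTranspose_eq_transpose_of_trivial] at this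
    rwa [hWt, hWB, Matrix.one_mul] at this
  have hSq : ((A - B) * (A - B)).PosSemidef := by
    have := Matrix.posSemidef_conjTranspose_mul_self (A - B)
    rw [Matrix.conjTranspose_eq_transpose_of_trivial] at this
    rwa [Matrix.transpose_sub, hAt, hBt] at this
  have key : 0 ≤ (W * ((A - B) * (A - B))).trace := psd_trace_mul_nonneg hWpsd hSq
  have expand : (A - B) * (A - B) = A * A - A * B - B * A + B * B := by noncomm_ring
  have tsplit : (W * ((A - B) * (A - B))).trace =
      (W * (A * A)).trace - (W * (A * B)).trace - (W * (B * A)).trace + (W * (B * B)).trace := by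
    rw [expand, Matrix.mul_add, Matrix.mul_sub, Matrix.mul_sub,
      Matrix.trace_add, Matrix.trace_sub, Matrix.trace_sub]
  have t1 : (W * (A * B)).trace = A.trace := by
    rw [Matrix.trace_mul_comm, Matrix.mul_assoc, hBW, Matrix.mul_one]
  have t2 : (W * (B * A)).trace = A.trace := by
    rw [← Matrix.mul_assoc, hWB, Matrix.one_mul]
  have t3 : (W * (B * B)).trace = B.trace := by
    rw [← Matrix.mul_assoc, hWB, Matrix.one_mul]
  rw [tsplit, t1, t2, t3, hAA] at key
  linarith
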